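/- Let f : (Fin n → Bool) → Bool and i : Fin n. If f is negative in coordinate i and coordinate i is essential for f, then the number of states s : Fin n → Bool with f s ≠ s i is strictly greater than 2^(n−1) and at most 2^n. -/

import Mathlib

/-- `f` does not depend on coordinate `i`. -/
def IndepOf {n : ℕ} (f : (Fin n → Bool) → Bool) (i : Fin n) : Prop :=
  ∀ (s : Fin n → Bool) (b : Bool), f (Function.update s i b) = f s

/-- Coordinate `i` is essential for `f`. -/
def EssentialCoord {n : ℕ} (f : (Fin n → Bool) → Bool) (i : Fin n) : Prop :=
  ∃ s : Fin n → Bool, f (Function.update s i false) ≠ f (Function.update s i true)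

/-- `f` is positive in coordinate `i`. -/
def PosIn {n : ℕ} (f : (Fin n → Bool) → Bool) (i : Fin n) : Prop :=
  ∀ s : Fin n → Bool,
    f (Function.update s i false) = true → f (Function.update s i true) = true

/-- `f` is negative in coordinate `i`. -/
def NegIn {n : ℕ} (f : (Fin n → Bool) → Bool) (i : Fin n) : Prop :=
  ∀ s : Fin n → Bool,
    f (Function.update s i true) = true → f (Function.update s i false) = true

/-- `f` is consistent with the sign vector `ε`: it is nondegenerate and each
coordinate acts with its prescribed sign. -/
def ConsistentWith {n : ℕ} (ε : Fin n → Bool) (f : (Fin n → Bool) → Bool) : Prop :=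
  (∀ i : Fin n, EssentialCoord f i) ∧
  ∀ i : Fin n, (ε i = true → PosIn f i) ∧ (ε i = false → NegIn f i)

/-- Number of transitions of `f` at coordinate `i`: states where `f s ≠ s i`. -/
noncomputable def numTrans {n : ℕ} (f : (Fin n → Bool) → Bool) (i : Fin n) : ℕ :=
  Nat.card {s : Fin n → Bool // f s ≠ s i}

/-- Number of increasing transitions of `f` at coordinate `i`. -/
noncomputable def numInc {n : ℕ} (f : (Fin n → Bool) → Bool) (i : Fin n) : ℕ :=
  Nat.card {s : Fin n → Bool // s i = false ∧ f s = true}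

/-- Number of decreasing transitions of `f` at coordinate `i`. -/
noncomputable def numDec {n : ℕ} (f : (Fin n → Bool) → Bool) (i : Fin n) : ℕ :=
  Nat.card {s : Fin n → Bool // s i = true ∧ f s = false}

theorem numTrans_gt_of_negative_essential (n : ℕ) (f : (Fin n → Bool) → Bool) (i : Fin n)
    (hneg : NegIn f i) (hess : EssentialCoord f i) :
    2 ^ (n - 1) < numTrans f i ∧ numTrans f i ≤ 2 ^ n := by
  classical
  have hn : 0 < n := i.pos
  set T : Finset (Fin n → Bool) := Finset.univ.filter (fun s => f s ≠ s i) with hTdef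
  have hT : numTrans f i = T.card := by
    rw [numTrans, Nat.card_eq_fintype_card, Fintype.card_subtype]
  set L : Finset (Fin n → Bool) := Finset.univ.filter (fun s => s i = false) with hLdef
  set H : Finset (Fin n → Bool) := Finset.univ.filter (fun s => s i = true) with hHdef
  have hcard_univ : (Finset.univ : Finset (Fin n → Bool)).card = 2 ^ n := by
    simp [Finset.card_univ]
  have hLH : L.card = H.card := by
    apply Finset.card_bij (fun s _ => Function.update s i true)
    · intro a ha
      simp [hHdef, Function.update_self]
    · intro a ha b hb hab
      have ha' : a i = false := by simpa [hLdef] using ha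
      have hb' : b i = false := by simpa [hLdef] using hb
      have h := congrArg (fun g => Function.update g i false) hab
      simp only [Function.update_idem] at h
      have ha2 : Function.update a i false = a := by rw [← ha', Function.update_eq_self]
      have hb2 : Function.update b i false = b := by rw [← hb', Function.update_eq_self]
      rw [ha2, hb2] at h
      exact h
    · intro b hb
      have hb' : b i = true := by simpa [hHdef] using hb
      refine ⟨Function.update b i false, ?_, ?_⟩
      · simp [hLdef, Function.update_self]
      · rw [Function.update_idem, ← hb', Function.update_eq_self]
  have hHeq : H = Finset.univ.filter (fun s => ¬ s i = false) := by
    rw [hHdef]; ext s; simp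
  have hsum : L.card + H.card = 2 ^ n := by
    rw [← hcard_univ, hLdef, hHeq, Finset.card_filter_add_card_filter_not]
  have hLcard : L.card = 2 ^ (n - 1) := by
    have h2 : 2 * L.card = 2 * 2 ^ (n - 1) := by
      have : 2 ^ n = 2 * 2 ^ (n - 1) := by
        conv_lhs => rw [show n = (n - 1) + 1 by omega]
        ring
      omega
    omega
  -- the injective map g : L → T
  set g : (Fin n → Bool) → (Fin n → Bool) :=
    fun t => if f t = true then t else Function.update t i true with hgdef
  have hg_mem : ∀ t ∈ L, g t ∈ T := by
    intro t ht
    have ht' : t i = false := by simpa [hLdef] using ht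
    by_cases hft : f t = true
    · simp [hgdef, hTdef, hft, ht']
    · have hft' : f t = false := by simpa using hft
      have hself : Function.update t i false = t := by
        rw [← ht', Function.update_eq_self]
      have : f (Function.update t i true) = false := by
        by_contra h
        have h' : f (Function.update t i true) = true := by simpa using h
        have := hneg t h'
        rw [hself] at this
        exact absurd this (by simp [hft'])
      simp [hgdef, hTdef, hft', this, Function.update_self]
  have hg_inj : ∀ t₁ ∈ L, ∀ t₂ ∈ L, g t₁ = g t₂ → t₁ = t₂ := by
    intro a ha b hb hab
    have ha' : a i = false := by simpa [hLdef] using ha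
    have hb' : b i = false := by simpa [hLdef] using hb
    have key : ∀ t : Fin n → Bool, t i = false → Function.update (g t) i false = t := by
      intro t ht
      by_cases hft : f t = true
      · simp [hgdef, hft, ← ht, Function.update_eq_self]
      · have hgt : g t = Function.update t i true := by rw [hgdef]; simp [hft]
        rw [hgt, Function.update_idem, ← ht, Function.update_eq_self]
    rw [← key a ha', ← key b hb', hab]
  -- essential witness gives an extra element of T
  obtain ⟨s0, hs0⟩ := hess
  set u := Function.update s0 i false with hu
  set v := Function.update s0 i true with hv
  have huv : Function.update v i false = u := by
    rw [hv, hu, Function.update_idem]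
  have hfv : f v = false := by
    by_contra h2
    have h2' : f v = true := by simpa using h2
    have hA : f u = true := hneg s0 h2'
    exact hs0 (hA.trans h2'.symm)
  have hfu : f u = true := by
    by_contra h
    have h' : f u = false := by simpa using h
    exact hs0 (h'.trans hfv.symm)
  have hvT : v ∈ T := by simp [hTdef, hfv, hv, Function.update_self]; exact hfv
  have hv_not : v ∉ L.image g := by
    intro hmem
    obtain ⟨t, ht, hgt⟩ := Finset.mem_image.mp hmem
    have ht' : t i = false := by simpa [hLdef] using ht
    by_cases hft : f t = true
    · have hid : g t = t := by simp [hgdef, hft]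
      rw [hid] at hgt
      rw [hgt, hv] at ht'
      simp at ht'
    · have hgt' : g t = Function.update t i true := by simp [hgdef, hft]
      rw [hgt'] at hgt
      have : t = u := by
        have := congrArg (fun w => Function.update w i false) hgt
        simp only [Function.update_idem] at this
        rw [huv] at this
        rw [← this, ← ht', Function.update_eq_self]
      rw [this] at hft
      exact hft hfu
  have hsub : insert v (L.image g) ⊆ T := by
    intro x hx
    rcases Finset.mem_insert.mp hx with h | h
    · rw [h]; exact hvT
    · obtain ⟨t, ht, hgt⟩ := Finset.mem_image.mp h
      rw [← hgt]; exact hg_mem t ht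
  have himg : (L.image g).card = L.card := Finset.card_image_of_injOn hg_inj
  have hins : (insert v (L.image g)).card = L.card + 1 := by
    rw [Finset.card_insert_of_notMem hv_not, himg]
  constructor
  · rw [hT]
    have := Finset.card_le_card hsub
    omega
  · rw [hT]
    calc T.card ≤ (Finset.univ : Finset (Fin n → Bool)).card := Finset.card_le_card (Finset.subset_univ _)
      _ = 2 ^ n := hcard_univ
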